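/- Let X₁ and X₀ be groups and d, c : X₁ → X₀, e : X₀ → X₁ group homomorphisms with d ∘ e = id and c ∘ e = id, let D = {(a,b) ∈ X₁ × X₁ : d(a) = c(b)}, and suppose m : D → X₁ is a group homomorphism satisfying m(a, e(d(a))) = a and m(e(c(b)), b) = b for all a, b ∈ X₁. Then the Peiffer identity holds on the kernel of d: for all a, b ∈ ker d, e(c(a)) · b · e(c(a))⁻¹ = a · b · a⁻¹. -/
import Mathlib


/-- The subgroup of composable pairs of a reflexive graph of groups:
`D = {(a,b) ∈ X₁ × X₁ : d a = c b}`. -/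
def compPairs {X₁ X₀ : Type*} [Group X₁] [Group X₀] (d c : X₁ →* X₀) :
    Subgroup (X₁ × X₁) where
  carrier := {p | d p.1 = c p.2}
  one_mem' := by simp
  mul_mem' := by
    intro a b ha hb
    simp only [Set.mem_setOf_eq, Prod.fst_mul, Prod.snd_mul, map_mul] at *
    rw [ha, hb]
  inv_mem' := by
    intro a ha
    simp only [Set.mem_setOf_eq, Prod.fst_inv, Prod.snd_inv, map_inv] at *
    rw [ha]

theorem mem_compPairs {X₁ X₀ : Type*} [Group X₁] [Group X₀] (d c : X₁ →* X₀)
    (p : X₁ × X₁) : p ∈ compPairs d c ↔ d p.1 = c p.2 := Iff.rfl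

/-- an internal category structure on a reflexive graph of groups forces
the Peiffer identity on `ker d`. -/
theorem peiffer_of_internal_category {X₁ X₀ : Type*} [Group X₁] [Group X₀]
    (d c : X₁ →* X₀) (e : X₀ →* X₁)
    (hde : ∀ x, d (e x) = x) (hce : ∀ x, c (e x) = x)
    (m : compPairs d c →* X₁)
    (hml : ∀ a : X₁, m ⟨(a, e (d a)), (mem_compPairs d c _).mpr (hce (d a)).symm⟩ = a)
    (hmr : ∀ b : X₁, m ⟨(e (c b), b), (mem_compPairs d c _).mpr (hde (c b))⟩ = b) :
    ∀ a b : X₁, a ∈ d.ker → b ∈ d.ker →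
      e (c a) * b * (e (c a))⁻¹ = a * b * a⁻¹ := by
  intro a b ha hb
  rw [MonoidHom.mem_ker] at ha hb
  -- helper: m (x, 1) = x whenever d x = 1
  have key : ∀ (x : X₁) (hx : d x = 1) (p : ((x, 1) : X₁ × X₁) ∈ compPairs d c),
      m ⟨(x, 1), p⟩ = x := by
    intro x hx p
    have heq : (⟨(x, 1), p⟩ : compPairs d c) =
        ⟨(x, e (d x)), (mem_compPairs d c _).mpr (hce (d x)).symm⟩ :=
      Subtype.ext (by simp [hx])
    rw [heq, hml]
  have hu : d (e (c a) * b * (e (c a))⁻¹) = 1 := by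
    simp [hde, hb]
  have h1 : (⟨(e (c a), a), (mem_compPairs d c _).mpr (hde (c a))⟩ : compPairs d c) *
      ⟨(b, 1), (mem_compPairs d c _).mpr (by simp [hb])⟩ =
      (⟨(e (c a) * b * (e (c a))⁻¹, 1),
        (mem_compPairs d c _).mpr (by simp [hu])⟩ : compPairs d c) *
      ⟨(e (c a), a), (mem_compPairs d c _).mpr (hde (c a))⟩ := by
    ext <;> simp [mul_assoc]
  have h2 := congrArg m h1
  rw [map_mul, map_mul, hmr a, key b hb, key _ hu] at h2
  -- h2 : a * b = (e (c a) * b * (e (c a))⁻¹) * a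
  exact eq_mul_inv_iff_mul_eq.mpr h2.symm
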